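/- Let Ω ⊆ EuclideanSpace ℝ (Fin 3) be a bounded measurable set, let m : EuclideanSpace ℝ (Fin 3) → ℝ be measurable with |m| ≤ M on Ω, let ε, δ, η > 0 with ε < 1 ≤ δ, and let k_GS(r) = Σ_{s∈S} ω s · r² · exp(−(α s)·r²) with α s ≥ 0 be a Gaussian-sum kernel satisfying |r − k_GS(r)| ≤ η for all r ∈ (ε, δ]. Let x ∈ EuclideanSpace ℝ (Fin 3) be such that ‖x − y‖ ≤ δ for all y ∈ Ω. Then there exists a constant C > 0 depending only on M, ω, α (not on ε, η, x) such that |∫_Ω ‖x−y‖ m(y) dy − ∫_Ω k_GS(‖x−y‖) m(y) dy| ≤ C ε⁴ + η · M · (Lebesgue measure of Ω). -/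

import Mathlib

open MeasureTheory BigOperators

theorem superpotential_gaussian_sum_kernel_replacement_error
    (Ω : Set (EuclideanSpace ℝ (Fin 3)))
    (hΩb : Bornology.IsBounded Ω) (hΩm : MeasurableSet Ω)
    (m : EuclideanSpace ℝ (Fin 3) → ℝ) (hm : Measurable m)
    (M : ℝ) (hM : ∀ y ∈ Ω, |m y| ≤ M)
    (δ : ℝ) (hδ : 1 ≤ δ)
    {S : Type*} [Fintype S] (ω α : S → ℝ) (hα : ∀ s, 0 ≤ α s)
    (kGS : ℝ → ℝ)
    (hk : ∀ r : ℝ, 0 ≤ r → kGS r = ∑ s, ω s * r ^ 2 * Real.exp (-(α s) * r ^ 2)) :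
    ∃ C > 0, ∀ (ε η : ℝ) (x : EuclideanSpace ℝ (Fin 3)),
      0 < ε → ε < 1 → 0 < η →
      (∀ r : ℝ, ε < r → r ≤ δ → |r - kGS r| ≤ η) →
      (∀ y ∈ Ω, ‖x - y‖ ≤ δ) →
      |(∫ y in Ω, ‖x - y‖ * m y) - ∫ y in Ω, kGS ‖x - y‖ * m y| ≤
        C * ε ^ 4 + η * M * (volume Ω).toReal := by
  classical
  set W : ℝ := ∑ s, |ω s| with hWdef
  have hW0 : 0 ≤ W := Finset.sum_nonneg fun s _ => abs_nonneg _
  set V : ℝ := (volume (Metric.ball (0 : EuclideanSpace ℝ (Fin 3)) 1)).toReal with hVdef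
  have hV0 : 0 ≤ V := ENNReal.toReal_nonneg
  set Mp : ℝ := max M 0 with hMpdef
  have hMp0 : 0 ≤ Mp := le_max_right _ _
  refine ⟨(1 + W) * Mp * V + 1, by positivity, ?_⟩
  intro ε η x hε hε1 hη hηk hxδ
  have hδ0 : (0 : ℝ) ≤ δ := le_trans zero_le_one hδ
  -- pointwise bound on kGS
  have hkb : ∀ r : ℝ, 0 ≤ r → |kGS r| ≤ W * r ^ 2 := by
    intro r hr
    rw [hk r hr]
    calc |∑ s, ω s * r ^ 2 * Real.exp (-(α s) * r ^ 2)|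
        ≤ ∑ s, |ω s * r ^ 2 * Real.exp (-(α s) * r ^ 2)| :=
          Finset.abs_sum_le_sum_abs _ _
      _ ≤ ∑ s, |ω s| * r ^ 2 := by
          refine Finset.sum_le_sum fun s _ => ?_
          rw [abs_mul, abs_mul, abs_of_nonneg (sq_nonneg r), Real.abs_exp]
          have he : Real.exp (-(α s) * r ^ 2) ≤ 1 := by
            rw [Real.exp_le_one_iff]
            have : 0 ≤ α s * r ^ 2 := mul_nonneg (hα s) (sq_nonneg r)
            nlinarith
          exact mul_le_of_le_one_right (mul_nonneg (abs_nonneg _) (sq_nonneg r)) he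
      _ = W * r ^ 2 := by rw [hWdef, Finset.sum_mul]
  rcases Set.eq_empty_or_nonempty Ω with rfl | ⟨y0, hy0⟩
  · simp only [Measure.restrict_empty, integral_zero_measure, sub_zero, abs_zero,
      measure_empty, ENNReal.toReal_zero, mul_zero, add_zero]
    positivity
  have hM0 : 0 ≤ M := le_trans (abs_nonneg _) (hM y0 hy0)
  have hMpM : Mp = M := max_eq_left hM0
  have hfin : volume Ω < ⊤ := hΩb.measure_lt_top
  -- measurability
  have hmeas1 : Measurable fun y : EuclideanSpace ℝ (Fin 3) => ‖x - y‖ * m y :=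
    ((measurable_id.const_sub x).norm).mul hm
  have hkfun : ∀ y : EuclideanSpace ℝ (Fin 3), kGS ‖x - y‖ =
      ∑ s, ω s * ‖x - y‖ ^ 2 * Real.exp (-(α s) * ‖x - y‖ ^ 2) :=
    fun y => hk _ (norm_nonneg _)
  have hmeas2 : Measurable fun y : EuclideanSpace ℝ (Fin 3) => kGS ‖x - y‖ * m y := by
    simp only [hkfun]
    have hn : Measurable fun y : EuclideanSpace ℝ (Fin 3) => ‖x - y‖ :=
      (measurable_id.const_sub x).norm
    exact (Finset.measurable_sum Finset.univ fun s _ =>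
      ((measurable_const.mul (hn.pow_const 2)).mul
        (((hn.pow_const 2).const_mul (-(α s))).exp))).mul hm
  -- integrability
  have hint1 : IntegrableOn (fun y => ‖x - y‖ * m y) Ω volume := by
    refine Measure.integrableOn_of_bounded (M := δ * M) hfin.ne
      hmeas1.aestronglyMeasurable ?_
    refine (ae_restrict_iff' hΩm).2 (Filter.Eventually.of_forall fun y hy => ?_)
    rw [Real.norm_eq_abs, abs_mul, abs_norm]
    exact mul_le_mul (hxδ y hy) (hM y hy) (abs_nonneg _) hδ0
  have hint2 : IntegrableOn (fun y => kGS ‖x - y‖ * m y) Ω volume := by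
    refine Measure.integrableOn_of_bounded (M := W * δ ^ 2 * M) hfin.ne
      hmeas2.aestronglyMeasurable ?_
    refine (ae_restrict_iff' hΩm).2 (Filter.Eventually.of_forall fun y hy => ?_)
    rw [Real.norm_eq_abs, abs_mul]
    have h1 : |kGS ‖x - y‖| ≤ W * δ ^ 2 := by
      refine le_trans (hkb _ (norm_nonneg _)) ?_
      have : ‖x - y‖ ^ 2 ≤ δ ^ 2 := by
        have := hxδ y hy; nlinarith [norm_nonneg (x - y)]
      nlinarith
    exact mul_le_mul h1 (hM y hy) (abs_nonneg _) (by positivity)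
  -- combine integrands
  have hintg : IntegrableOn
      (fun y => (‖x - y‖ - kGS ‖x - y‖) * m y) Ω volume := by
    simpa [sub_mul, Pi.sub_def] using hint1.sub hint2
  have hkey : (∫ y in Ω, ‖x - y‖ * m y) - ∫ y in Ω, kGS ‖x - y‖ * m y =
      ∫ y in Ω, (‖x - y‖ - kGS ‖x - y‖) * m y := by
    rw [← integral_sub hint1 hint2]
    exact integral_congr_ae (Filter.Eventually.of_forall fun y => by ring)
  set B := Metric.closedBall x ε with hBdef
  have hBm : MeasurableSet B := Metric.isClosed_closedBall.measurableSet
  have hsplit :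
      (∫ y in Ω ∩ B, (‖x - y‖ - kGS ‖x - y‖) * m y) +
        ∫ y in Ω \ B, (‖x - y‖ - kGS ‖x - y‖) * m y =
      ∫ y in Ω, (‖x - y‖ - kGS ‖x - y‖) * m y :=
    integral_inter_add_diff hBm hintg
  -- near bound
  have hnear : ‖∫ y in Ω ∩ B, (‖x - y‖ - kGS ‖x - y‖) * m y‖ ≤
      ((1 + W) * ε * M) * (volume (Ω ∩ B)).toReal := by
    refine norm_setIntegral_le_of_norm_le_const
      ((measure_mono Set.inter_subset_left).trans_lt hfin) (fun y hy => ?_)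
    obtain ⟨hyΩ, hyB⟩ := hy
    have hr : ‖x - y‖ ≤ ε := by
      rw [norm_sub_rev]
      have := Metric.mem_closedBall.1 hyB
      rwa [dist_eq_norm] at this
    have hr0 : (0 : ℝ) ≤ ‖x - y‖ := norm_nonneg _
    rw [Real.norm_eq_abs, abs_mul]
    have h1 : |‖x - y‖ - kGS ‖x - y‖| ≤ (1 + W) * ε := by
      have h2 := hkb ‖x - y‖ hr0
      have h3 : ‖x - y‖ ^ 2 ≤ ε := by nlinarith
      have h4 : |‖x - y‖| ≤ ε := by rwa [abs_norm]
      calc |‖x - y‖ - kGS ‖x - y‖| ≤ |‖x - y‖| + |kGS ‖x - y‖| := abs_sub _ _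
        _ ≤ ε + W * ε := by
            refine add_le_add h4 (h2.trans ?_)
            exact mul_le_mul_of_nonneg_left h3 hW0
        _ = (1 + W) * ε := by ring
    exact mul_le_mul h1 (hM y hyΩ) (abs_nonneg _) (by positivity)
  -- far bound
  have hfar : ‖∫ y in Ω \ B, (‖x - y‖ - kGS ‖x - y‖) * m y‖ ≤
      (η * M) * (volume (Ω \ B)).toReal := by
    refine norm_setIntegral_le_of_norm_le_const
      ((measure_mono Set.diff_subset).trans_lt hfin) (fun y hy => ?_)
    obtain ⟨hyΩ, hyB⟩ := hy
    have hr : ε < ‖x - y‖ := by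
      rw [norm_sub_rev]
      have := hyB
      rwa [hBdef, Metric.mem_closedBall, not_le, dist_eq_norm] at this
    rw [Real.norm_eq_abs, abs_mul]
    exact mul_le_mul (hηk _ hr (hxδ y hyΩ)) (hM y hyΩ) (abs_nonneg _) hη.le
  -- volume of the ball
  have hvolB : (volume (Ω ∩ B)).toReal ≤ ε ^ 3 * V := by
    have h1 : volume B = ENNReal.ofReal (ε ^ 3) *
        volume (Metric.ball (0 : EuclideanSpace ℝ (Fin 3)) 1) := by
      have := Measure.addHaar_closedBall (volume) x hε.le
      rwa [finrank_euclideanSpace_fin] at this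
    have h2 : volume (Ω ∩ B) ≤ volume B := measure_mono Set.inter_subset_right
    have h3 : volume B ≠ ⊤ := by
      rw [h1]
      exact ENNReal.mul_ne_top ENNReal.ofReal_ne_top
        (measure_ball_lt_top).ne
    calc (volume (Ω ∩ B)).toReal ≤ (volume B).toReal :=
          ENNReal.toReal_mono h3 h2
      _ = ε ^ 3 * V := by
          rw [h1, ENNReal.toReal_mul, ENNReal.toReal_ofReal (by positivity)]
  have hvolF : (volume (Ω \ B)).toReal ≤ (volume Ω).toReal :=
    ENNReal.toReal_mono hfin.ne (measure_mono Set.diff_subset)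
  -- assemble
  rw [hkey, ← hsplit]
  have hMle : M ≤ Mp := le_max_left _ _
  calc |(∫ y in Ω ∩ B, (‖x - y‖ - kGS ‖x - y‖) * m y) +
        ∫ y in Ω \ B, (‖x - y‖ - kGS ‖x - y‖) * m y|
      ≤ |∫ y in Ω ∩ B, (‖x - y‖ - kGS ‖x - y‖) * m y| +
        |∫ y in Ω \ B, (‖x - y‖ - kGS ‖x - y‖) * m y| := abs_add_le _ _
    _ ≤ ((1 + W) * ε * M) * (volume (Ω ∩ B)).toReal +
        (η * M) * (volume (Ω \ B)).toReal := add_le_add hnear hfar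
    _ ≤ ((1 + W) * ε * M) * (ε ^ 3 * V) + (η * M) * (volume Ω).toReal := by
        refine add_le_add ?_ ?_
        · exact mul_le_mul_of_nonneg_left hvolB
            (mul_nonneg (mul_nonneg (by linarith) hε.le) hM0)
        · exact mul_le_mul_of_nonneg_left hvolF (mul_nonneg hη.le hM0)
    _ ≤ ((1 + W) * Mp * V + 1) * ε ^ 4 + η * M * (volume Ω).toReal := by
        have h1 : ((1 + W) * ε * M) * (ε ^ 3 * V) = ((1 + W) * M * V) * ε ^ 4 := by
          ring
        rw [h1]
        have h2 : ((1 + W) * M * V) * ε ^ 4 ≤ ((1 + W) * Mp * V + 1) * ε ^ 4 := by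
          have : (1 + W) * M * V ≤ (1 + W) * Mp * V + 1 := by rw [hMpM]; linarith
          exact mul_le_mul_of_nonneg_right this (by positivity)
        linarith
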